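/- For all closed-style marked terms λx.M and N in Λ•, the read-back of the application (λx.M) N β-reduces in one step to the read-back of M[x:=N]. Formally: RB((λx.M) N) → RB(M[x:=N]). -/
import Mathlib


/-- Lambda terms, extended with "atoms" `⌈M⌉` that wrap a term. -/
inductive Tm : Type
  | var : String → Tm
  | app : Tm → Tm → Tm
  | lam : String → Tm → Tm
  | atom : Tm → Tm
deriving DecidableEq

namespace Tm

/-- A pure lambda term (an element of Λ): contains no atoms. -/
def Pure : Tm → Prop
  | var _ => True
  | app a b => Pure a ∧ Pure b
  | lam _ m => Pure m
  | atom _ => False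

/-- Free variables; atoms have no free variables. -/
def FV : Tm → Finset String
  | var x => {x}
  | app a b => FV a ∪ FV b
  | lam x m => FV m \ {x}
  | atom _ => ∅

/-- Substitution; atoms are unaffected. -/
def subst : Tm → String → Tm → Tm
  | var y, x, N => if y = x then N else var y
  | app a b, x, N => app (a.subst x N) (b.subst x N)
  | lam y m, x, N => if y = x then lam y m else lam y (m.subst x N)
  | atom m, _, _ => atom m

/-- `apps M [N₁,…,Nₙ] = M N₁ ⋯ Nₙ`. -/
def apps (M : Tm) (Ns : List Tm) : Tm := Ns.foldl app M

/-- Replace each free variable `x` (not in the bound list) by the atom `⌈x⌉`. -/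
def bulletAux : List String → Tm → Tm
  | bs, var x => if x ∈ bs then var x else atom (var x)
  | bs, app a b => app (bulletAux bs a) (bulletAux bs b)
  | bs, lam x m => lam x (bulletAux (x :: bs) m)
  | _, atom m => atom m

/-- `M•`: replace each free variable `x` of `M` by the atom `⌈x⌉`. -/
def bullet (M : Tm) : Tm := bulletAux [] M

/-- Read-back `RB : Λ• → Λ`: `RB (M N) = RB M (RB N)`,
`RB (λx.M) = λx.RB (M[x:=⌈x⌉])`, `RB ⌈M⌉ = M` (stated structurally,
which agrees with the above since `RB (M[x:=⌈x⌉]) = RB M` here). -/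
def RB : Tm → Tm
  | var x => var x
  | app a b => app (RB a) (RB b)
  | lam x m => lam x (RB m)
  | atom m => m

end Tm

/-- Membership in Λ• = { M• | M ∈ Λ }. -/
def IsBullet (M : Tm) : Prop := ∃ P : Tm, P.Pure ∧ M = P.bullet

/-- One-step β-reduction (atoms are inert). -/
inductive Beta : Tm → Tm → Prop
  | beta (x M N) : Beta (.app (.lam x M) N) (M.subst x N)
  | appL {M M'} (N) : Beta M M' → Beta (.app M N) (.app M' N)
  | appR (M) {N N'} : Beta N N' → Beta (.app M N) (.app M N')
  | lam (x) {M M'} : Beta M M' → Beta (.lam x M) (.lam x M')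

/-- β-normal form. -/
def NF (M : Tm) : Prop := ∀ N, ¬ Beta M N

/-- One-hole contexts. -/
inductive Ctx : Type
  | hole
  | appL : Ctx → Tm → Ctx
  | appR : Tm → Ctx → Ctx
  | lam : String → Ctx → Ctx

namespace Ctx

/-- `C[M]`: fill the hole of `C` with `M`. -/
def fill : Ctx → Tm → Tm
  | hole, M => M
  | appL C N, M => .app (C.fill M) N
  | appR N C, M => .app N (C.fill M)
  | lam x C, M => .lam x (C.fill M)

/-- Composition of contexts: `(C.comp D)[M] = C[D[M]]`. -/
def comp : Ctx → Ctx → Ctx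
  | hole, D => D
  | appL C N, D => appL (C.comp D) N
  | appR N C, D => appR N (C.comp D)
  | lam x C, D => lam x (C.comp D)

/-- A context over pure lambda terms. -/
def Pure : Ctx → Prop
  | hole => True
  | appL C N => C.Pure ∧ N.Pure
  | appR N C => N.Pure ∧ C.Pure
  | lam _ C => C.Pure

end Ctx

/-- A context is normal iff it maps β-normal forms to β-normal forms. -/
def NormalCtx (C : Ctx) : Prop := ∀ M, NF M → NF (C.fill M)

/-- The set Λ^rb: atoms `⌈M⌉`; pairs `⟨C[·], M⟩` with `M ∈ Λ•`
(applications `M ⃗N` with head in `Λ•` are encoded inside the `Tm`);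
and `⟨C[·], M ⃗N⟩` with `M ∈ Λ^rb`, `⃗N ∈ Λ•`. -/
inductive Rb : Type
  | atom : Tm → Rb
  | pair : Ctx → Tm → Rb
  | papp : Ctx → Rb → List Tm → Rb

namespace Rb

/-- Well-formedness: side conditions of membership in Λ^rb. -/
def WF : Rb → Prop
  | atom M => M.Pure
  | pair C M => C.Pure ∧ IsBullet M
  | papp C M Ns => C.Pure ∧ M.WF ∧ ∀ N ∈ Ns, IsBullet N

/-- Read-back on Λ^rb. -/
def rb : Rb → Tm
  | atom M => M
  | pair C M => C.fill M.RB
  | papp C M Ns => C.fill (Tm.apps M.rb (Ns.map Tm.RB))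

end Rb

/-- The reduction relation on Λ^rb (Definition 4 of the paper). -/
inductive Step : Rb → Rb → Prop
  | collapse (C M) : Step (.pair C (.atom M)) (.atom (C.fill M))
  | lam (C x M) :
      Step (.pair C (.lam x M))
        (.pair (C.comp (.lam x .hole)) (M.subst x (.atom (.var x))))
  | split (C M N₀ Ns) :
      Step (.pair C (Tm.apps (.atom M) (N₀ :: Ns)))
        (.papp C (.pair (.appR M .hole) N₀) Ns)
  | beta (C x M N₀ Ns) :
      Step (.pair C (Tm.apps (.lam x M) (N₀ :: Ns)))
        (.pair C (Tm.apps (M.subst x N₀) Ns))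
  | collapseNil (C M) : Step (.papp C (.atom M) []) (.atom (C.fill M))
  | splitCons (C M N₀ Ns) :
      Step (.papp C (.atom M) (N₀ :: Ns)) (.papp C (.pair (.appR M .hole) N₀) Ns)
  | cong (C Ns) {M M'} : Step M M' → Step (.papp C M Ns) (.papp C M' Ns)

/-- The steps of `Step` that contract a β-redex (rule 4, possibly under head congruence). -/
inductive BStep : Rb → Rb → Prop
  | beta (C x M N₀ Ns) :
      BStep (.pair C (Tm.apps (.lam x M) (N₀ :: Ns)))
        (.pair C (Tm.apps (M.subst x N₀) Ns))
  | cong (C Ns) {M M'} : BStep M M' → BStep (.papp C M Ns) (.papp C M' Ns)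

/-- Contraction of the leftmost β-redex. -/
inductive Leftmost : Tm → Tm → Prop
  | beta (x M N) : Leftmost (.app (.lam x M) N) (M.subst x N)
  | lam (x) {M M'} : Leftmost M M' → Leftmost (.lam x M) (.lam x M')
  | appL {M M'} (N) : (∀ x M₀, M ≠ Tm.lam x M₀) → Leftmost M M' →
      Leftmost (.app M N) (.app M' N)
  | appR (M) {N N'} : NF M → (∀ x M₀, M ≠ Tm.lam x M₀) → Leftmost N N' →
      Leftmost (.app M N) (.app M N')
/-- Atoms occurring in `M` do not mention `x` freely. -/
def AtomsAvoid (x : String) : Tm → Prop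
  | .var _ => True
  | .app a b => AtomsAvoid x a ∧ AtomsAvoid x b
  | .lam _ m => AtomsAvoid x m
  | .atom m => x ∉ m.FV

theorem subst_of_not_free (x : String) (K : Tm) :
    ∀ M : Tm, x ∉ M.FV → M.subst x K = M := by
  intro M
  induction M with
  | var y =>
      intro h
      simp [Tm.FV] at h
      rw [Tm.subst, if_neg (fun e => h e.symm)]
  | app a b iha ihb =>
      intro h
      simp [Tm.FV] at h
      simp [Tm.subst, iha h.1, ihb h.2]
  | lam y m ih =>
      intro h
      by_cases hy : y = x
      · simp [Tm.subst, hy]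
      · have : x ∉ m.FV := by
          simp [Tm.FV] at h
          intro hx; exact (Ne.symm hy) (h hx)
        simp [Tm.subst, hy, ih this]
  | atom m _ => intro _; rfl

theorem rb_subst (x : String) (N : Tm) :
    ∀ M : Tm, AtomsAvoid x M →
      Tm.RB (M.subst x N) = (Tm.RB M).subst x (Tm.RB N) := by
  intro M
  induction M with
  | var y =>
      intro _
      by_cases h : y = x <;> simp [Tm.subst, Tm.RB, h]
  | app a b iha ihb =>
      intro h
      simp [Tm.subst, Tm.RB, iha h.1, ihb h.2]
  | lam y m ih =>
      intro h
      by_cases hy : y = x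
      · simp [Tm.subst, Tm.RB, hy]
      · simp [Tm.subst, Tm.RB, hy, ih h]
  | atom m _ =>
      intro h
      simp [Tm.subst, Tm.RB]
      exact (subst_of_not_free x (Tm.RB N) m h).symm

theorem bulletAux_atomsAvoid (x : String) :
    ∀ (P : Tm), P.Pure → ∀ (bs : List String), x ∈ bs → AtomsAvoid x (Tm.bulletAux bs P) := by
  intro P
  induction P with
  | var y =>
      intro _ bs hx
      by_cases h : y ∈ bs
      · simp [Tm.bulletAux, h, AtomsAvoid]
      · have hyx : y ≠ x := fun e => h (e ▸ hx)
        simp [Tm.bulletAux, h, AtomsAvoid, Tm.FV]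
        exact fun e => hyx e.symm
  | app a b iha ihb =>
      intro hp bs hx
      exact ⟨iha hp.1 bs hx, ihb hp.2 bs hx⟩
  | lam y m ih =>
      intro hp bs hx
      exact ih hp (y :: bs) (List.mem_cons_of_mem _ hx)
  | atom m _ =>
      intro hp
      exact absurd hp not_false

/-- `RB ((λx.M) N) →β RB (M[x:=N])` for `λx.M, N ∈ Λ•`. -/
theorem rb_beta (x : String) (M N : Tm)
    (hM : IsBullet (Tm.lam x M)) (hN : IsBullet N) :
    Beta (Tm.RB (.app (.lam x M) N)) (Tm.RB (M.subst x N)) := by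
  obtain ⟨P, hPpure, hP⟩ := hM
  have hav : AtomsAvoid x M := by
    cases P with
    | var y =>
        simp [Tm.bullet, Tm.bulletAux] at hP
    | app a b => simp [Tm.bullet, Tm.bulletAux] at hP
    | lam y m =>
        simp [Tm.bullet, Tm.bulletAux] at hP
        obtain ⟨hy, hm⟩ := hP
        rw [hm]
        exact bulletAux_atomsAvoid x m hPpure [y] (by simp [hy])
    | atom m => simp [Tm.bullet, Tm.bulletAux] at hP
  have := rb_subst x N M hav
  rw [this]
  show Beta (.app (.lam x (Tm.RB M)) (Tm.RB N)) _
  exact Beta.beta x (Tm.RB M) (Tm.RB N)
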